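/- Fix an integer $N \geq 2$ and let $\theta_j = \frac{2\pi j}{N}$. For every $N$-th partial-sum structure the following holds: for all $t \in (0,1)$, $\sum_{j=1}^{N} \frac{1}{(1 - t\cos(\theta_j - \frac{\pi}{N}))^{3/2}} < \sum_{j=1}^{N} \frac{1}{(1 - t\cos\theta_j)^{3/2}}$. -/

import Mathlib

open Real


noncomputable def bb (m : ℕ) : ℝ := ∏ i ∈ Finset.range m, (((i : ℝ) + 3/2) / ((i : ℝ) + 1))

lemma bb_pos (m : ℕ) : 0 < bb m := by
  apply Finset.prod_pos; intro i _; positivity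

lemma bb_zero : bb 0 = 1 := by simp [bb]

lemma bb_succ (m : ℕ) : bb (m+1) = bb m * (((m:ℝ) + 3/2) / ((m:ℝ) + 1)) := by
  simp only [bb, Finset.prod_range_succ]

lemma bb_rec (m : ℕ) : ((m:ℝ) + 1) * bb (m+1) = ((m:ℝ) + 3/2) * bb m := by
  rw [bb_succ]; field_simp

lemma bb_le (m : ℕ) : bb m ≤ (m:ℝ) + 1 := by
  induction m with
  | zero => simp [bb_zero]
  | succ n ih =>
    rw [bb_succ]
    have h1 : ((n:ℝ) + 3/2) / ((n:ℝ) + 1) ≤ ((n:ℝ) + 2) / ((n:ℝ) + 1) := by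
      apply div_le_div_of_nonneg_right ?_ (by positivity)
      · linarith
    calc bb n * (((n:ℝ) + 3/2) / ((n:ℝ) + 1)) ≤ ((n:ℝ)+1) * (((n:ℝ) + 2) / ((n:ℝ) + 1)) := by
          apply mul_le_mul ih h1 (by positivity) (by positivity)
      _ = (n:ℝ) + 2 := by field_simp
      _ = ((n:ℕ)+1 : ℕ) + 1 := by push_cast; ring

lemma summable_aux {r : ℝ} (hr : |r| < 1) (c₀ c₁ c₂ : ℝ) :
    Summable (fun m : ℕ => (c₂ * (m:ℝ)^2 + c₁ * (m:ℝ) + c₀) * r^m) := by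
  have h0 : Summable (fun m : ℕ => (m:ℝ)^0 * r^m) :=
    summable_pow_mul_geometric_of_norm_lt_one 0 (by rwa [Real.norm_eq_abs])
  have h1 : Summable (fun m : ℕ => (m:ℝ)^1 * r^m) :=
    summable_pow_mul_geometric_of_norm_lt_one 1 (by rwa [Real.norm_eq_abs])
  have h2 : Summable (fun m : ℕ => (m:ℝ)^2 * r^m) :=
    summable_pow_mul_geometric_of_norm_lt_one 2 (by rwa [Real.norm_eq_abs])
  have := ((h2.mul_left c₂).add (h1.mul_left c₁)).add (h0.mul_left c₀)
  convert this using 2 with m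
  case e'_3 => rfl
  ring

lemma bb_summable {u : ℝ} (hu : |u| < 1) : Summable (fun m : ℕ => bb m * u^m) := by
  apply Summable.of_norm_bounded ((summable_aux (r := |u|) (by rwa [abs_abs]) 1 1 0).congr
    (fun m => by ring_nf : ∀ m : ℕ, (0 * (m:ℝ)^2 + 1 * (m:ℝ) + 1) * |u|^m = ((m:ℝ)+1) * |u|^m))
  intro m
  rw [norm_mul, Real.norm_eq_abs, Real.norm_eq_abs, abs_pow, abs_of_pos (bb_pos m)]
  exact mul_le_mul_of_nonneg_right (bb_le m) (by positivity)

lemma deriv_bound {x : ℝ} {r : ℝ} (hx : |x| ≤ r) (m : ℕ) :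
    ‖bb m * ((m:ℝ) * x^(m-1))‖ ≤ ((m:ℝ)+1) * ((m:ℝ) * r^(m-1)) := by
  have hr0 : 0 ≤ r := le_trans (abs_nonneg x) hx
  rw [norm_mul, Real.norm_eq_abs, Real.norm_eq_abs, abs_of_pos (bb_pos m), abs_mul,
    Nat.abs_cast, abs_pow]
  apply mul_le_mul (bb_le m) ?_ (by positivity) (by positivity)
  exact mul_le_mul_of_nonneg_left (pow_le_pow_left₀ (abs_nonneg x) hx _) (Nat.cast_nonneg m)

lemma deriv_summable_bound {r : ℝ} (hr0 : 0 ≤ r) (hr : r < 1) :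
    Summable (fun m : ℕ => ((m:ℝ)+1) * ((m:ℝ) * r^(m-1))) := by
  rw [← summable_nat_add_iff 1]
  have : ∀ m : ℕ, ((((m:ℕ)+1:ℕ):ℝ)+1) * ((((m:ℕ)+1:ℕ):ℝ) * r^((m+1)-1)) =
      (1 * (m:ℝ)^2 + 3 * (m:ℝ) + 2) * r^m := by
    intro m; simp only [Nat.add_sub_cancel]; push_cast; ring
  exact (summable_aux (by rwa [abs_of_nonneg hr0]) 2 3 1).congr (fun m => (this m).symm)

lemma deriv_summable {y : ℝ} (hy : |y| < 1) :
    Summable (fun m : ℕ => bb m * ((m:ℝ) * y^(m-1))) :=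
  Summable.of_norm_bounded (deriv_summable_bound (abs_nonneg y) hy) (deriv_bound le_rfl)

lemma f_hasDeriv {y : ℝ} (hy : |y| < 1) :
    HasDerivAt (fun u : ℝ => ∑' m, bb m * u^m) (∑' m : ℕ, bb m * ((m:ℝ) * y^(m-1))) y := by
  set r := (|y| + 1) / 2 with hrdef
  have hyr : |y| < r := by rw [hrdef]; linarith
  have hr0 : 0 ≤ r := le_trans (abs_nonneg y) hyr.le
  have hr1 : r < 1 := by rw [hrdef]; linarith
  apply hasDerivAt_tsum_of_isPreconnected (deriv_summable_bound hr0 hr1)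
    (isOpen_Ioo (a := -r) (b := r)) (isPreconnected_Ioo)
    (fun m x _ => ((hasDerivAt_pow m x).const_mul (bb m)))
    (fun m x hx => deriv_bound (abs_le.mpr ⟨hx.1.le, hx.2.le⟩) m)
    (show (0:ℝ) ∈ Set.Ioo (-r) r from by
      have hrpos : 0 < r := lt_of_le_of_lt (abs_nonneg y) hyr
      exact ⟨by linarith, hrpos⟩)
    (bb_summable (by norm_num))
    (abs_lt.mp hyr |> fun h => ⟨h.1, h.2⟩)

lemma ode_identity {y : ℝ} (hy : |y| < 1) :
    (1 - y) * (∑' m : ℕ, bb m * ((m:ℝ) * y^(m-1))) = (3/2) * (∑' m : ℕ, bb m * y^m) := by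
  have hψ : Summable (fun m : ℕ => bb m * ((m:ℝ) * y^(m-1))) := deriv_summable hy
  -- shifted series
  have hshift : Summable (fun m : ℕ => bb (m+1) * (((m:ℕ)+1:ℝ) * y^m)) := by
    have := (summable_nat_add_iff 1).mpr hψ
    exact this.congr (fun m => by simp [Nat.add_sub_cancel])
  have hA : (∑' m : ℕ, bb m * ((m:ℝ) * y^(m-1))) = ∑' m : ℕ, bb (m+1) * (((m:ℕ)+1:ℝ) * y^m) := by
    rw [Summable.tsum_eq_zero_add hψ]
    simp [Nat.add_sub_cancel]
  -- χ m = bb m * m * y^m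
  have hχ : Summable (fun m : ℕ => bb m * ((m:ℝ) * y^m)) := by
    apply Summable.of_norm_bounded ((summable_aux (r := |y|) (by rwa [abs_abs]) 0 1 1).congr
      (fun m => by ring_nf : ∀ m : ℕ, (1 * (m:ℝ)^2 + 1 * (m:ℝ) + 0) * |y|^m
         = ((m:ℝ)+1) * ((m:ℝ) * |y|^m)))
    intro m
    rw [norm_mul, Real.norm_eq_abs, Real.norm_eq_abs, abs_of_pos (bb_pos m), abs_mul,
      Nat.abs_cast, abs_pow]
    apply mul_le_mul (bb_le m) le_rfl (by positivity) (by positivity)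
  have hB : y * (∑' m : ℕ, bb m * ((m:ℝ) * y^(m-1))) = ∑' m : ℕ, bb m * ((m:ℝ) * y^m) := by
    rw [hA, ← tsum_mul_left, Summable.tsum_eq_zero_add hχ]
    simp only [Nat.cast_zero, zero_mul, mul_zero, zero_add, Nat.cast_add, Nat.cast_one]
    congr 1
    funext m
    rw [pow_succ]
    ring
  have key : (1 - y) * (∑' m : ℕ, bb m * ((m:ℝ) * y^(m-1)))
      = ∑' m : ℕ, (bb (m+1) * (((m:ℕ)+1:ℝ)) - bb m * (m:ℝ)) * y^m := by
    rw [sub_mul, one_mul, hB]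
    nth_rewrite 1 [hA]
    rw [← Summable.tsum_sub hshift hχ]
    congr 1; funext m; ring
  rw [key, ← tsum_mul_left]
  congr 1; funext m
  have : bb (m+1) * (((m:ℕ)+1:ℝ)) - bb m * (m:ℝ) = (3/2) * bb m := by
    push_cast
    nlinarith [bb_rec m]
  rw [this]; ring

lemma hasSum_bb {u : ℝ} (hu : |u| < 1) :
    HasSum (fun m : ℕ => bb m * u^m) ((1-u) ^ (-(3:ℝ)/2)) := by
  set h : ℝ → ℝ := fun z => (∑' m : ℕ, bb m * z^m) * (1-z)^((3:ℝ)/2) with hh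
  have hderiv : ∀ y ∈ Set.Ioo (-1:ℝ) 1, HasDerivAt h 0 y := by
    intro y hy
    have hy1 : |y| < 1 := abs_lt.mpr ⟨hy.1, hy.2⟩
    have hpos : (0:ℝ) < 1 - y := by linarith [hy.2]
    have hinner : HasDerivAt (fun z : ℝ => 1 - z) (-1) y := by
      simpa using (hasDerivAt_id y).const_sub 1
    have houter : HasDerivAt (fun x : ℝ => x ^ ((3:ℝ)/2))
        ((3:ℝ)/2 * (1-y) ^ ((3:ℝ)/2 - 1)) (1-y) :=
      Real.hasDerivAt_rpow_const (Or.inr (by norm_num))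
    have hg : HasDerivAt (fun z : ℝ => (1-z) ^ ((3:ℝ)/2))
        ((3:ℝ)/2 * (1-y) ^ ((3:ℝ)/2 - 1) * (-1)) y := houter.comp y hinner
    have hmul := (f_hasDeriv hy1).mul hg
    have hzero : (∑' m : ℕ, bb m * ((m:ℝ) * y^(m-1))) * (1-y)^((3:ℝ)/2)
        + (∑' m : ℕ, bb m * y^m) * ((3:ℝ)/2 * (1-y) ^ ((3:ℝ)/2 - 1) * (-1)) = 0 := by
      rw [show ((3:ℝ)/2) = 1 + 1/2 by norm_num, Real.rpow_add hpos, Real.rpow_one,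
        show (1:ℝ) + 1/2 - 1 = 1/2 by norm_num]
      linear_combination (1-y) ^ ((1:ℝ)/2) * (ode_identity hy1)
    rw [hh]
    rw [hzero] at hmul
    exact hmul
  have hmemu : u ∈ Set.Ioo (-1:ℝ) 1 := ⟨(abs_lt.mp hu).1, (abs_lt.mp hu).2⟩
  have hmem0 : (0:ℝ) ∈ Set.Ioo (-1:ℝ) 1 := by norm_num
  have hconst : h u = h 0 := by
    apply (convex_Ioo (-1:ℝ) 1).is_const_of_fderivWithin_eq_zero
      (fun y hy => ((hderiv y hy).differentiableAt.differentiableWithinAt)) ?_ hmemu hmem0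
    intro y hy
    rw [fderivWithin_of_isOpen isOpen_Ioo hy, (hderiv y hy).hasFDerivAt.fderiv]
    ext z
    simp
  have h0 : h 0 = 1 := by
    rw [hh]
    simp only [sub_zero, Real.one_rpow, mul_one]
    rw [tsum_eq_single 0 (fun m hm => by simp [zero_pow hm])]
    simp [bb_zero]
  have hfs : (∑' m : ℕ, bb m * u^m) = ((1-u)^((3:ℝ)/2))⁻¹ := by
    apply eq_inv_of_mul_eq_one_left
    calc (∑' m : ℕ, bb m * u^m) * (1-u)^((3:ℝ)/2) = h u := rfl
      _ = h 0 := hconst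
      _ = 1 := h0
  have hs := (bb_summable hu).hasSum
  rw [hfs] at hs
  rw [show (-(3:ℝ)/2) = -((3:ℝ)/2) by norm_num, Real.rpow_neg (by linarith [hmemu.2])]
  exact hs


lemma neg_one_zpow_flip (q : ℤ) : ((-1:ℂ))^(-q) = (-1:ℂ)^q := by
  rw [zpow_neg]
  have h : ((-1:ℂ))^q * ((-1:ℂ))^q = 1 := by
    rw [← zpow_add₀ (by norm_num : (-1:ℂ) ≠ 0), show q + q = 2 * q by ring, zpow_mul]
    norm_num
  exact inv_eq_of_mul_eq_one_right h

lemma Esum (N : ℕ) (hN : 1 ≤ N) (r : ℤ) :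
    ∑ j ∈ Finset.Icc 1 N, Complex.exp (Complex.I * (r:ℂ) * (2*(π:ℂ)/(N:ℂ)) * (j:ℂ))
      = if (N:ℤ) ∣ r then (N:ℂ) else 0 := by
  have hN0 : (N:ℂ) ≠ 0 := Nat.cast_ne_zero.mpr (by omega)
  set w : ℂ := Complex.I * (r:ℂ) * (2*(π:ℂ)/(N:ℂ)) with hw
  have hterm : ∀ j : ℕ, Complex.exp (w * (j:ℂ)) = (Complex.exp w)^j := by
    intro j; rw [mul_comm, Complex.exp_nat_mul]
  simp only [hterm]
  by_cases hd : (N:ℤ) ∣ r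
  · obtain ⟨q, hq⟩ := hd
    have hw1 : Complex.exp w = 1 := by
      have harg : w = (q:ℂ) * (2*(π:ℂ)*Complex.I) := by
        rw [hw, hq]; push_cast; field_simp
      rw [harg]
      exact Complex.exp_int_mul_two_pi_mul_I q
    rw [if_pos ⟨q, hq⟩]
    simp [hw1, Nat.card_Icc]
  · have h2π : (2*(π:ℂ)*Complex.I) ≠ 0 := by
      simp [Real.pi_ne_zero, Complex.I_ne_zero, Complex.ofReal_ne_zero]
    have hz1 : Complex.exp w ≠ 1 := by
      intro h
      obtain ⟨n, hn⟩ := Complex.exp_eq_one_iff.mp h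
      apply hd
      refine ⟨n, ?_⟩
      have h3 : (r:ℂ) * (2*(π:ℂ)*Complex.I) = ((N:ℂ)*(n:ℂ)) * (2*(π:ℂ)*Complex.I) := by
        calc (r:ℂ) * (2*(π:ℂ)*Complex.I)
            = (N:ℂ) * w := by rw [hw]; field_simp
          _ = (N:ℂ) * ((n:ℂ) * (2*(π:ℂ)*Complex.I)) := by rw [hn]
          _ = ((N:ℂ)*(n:ℂ)) * (2*(π:ℂ)*Complex.I) := by ring
      have h4 : (r:ℂ) = (N:ℂ)*(n:ℂ) := mul_right_cancel₀ h2π h3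
      exact_mod_cast h4
    have hzN : (Complex.exp w)^N = 1 := by
      rw [← Complex.exp_nat_mul]
      have harg : (N:ℂ) * w = (r:ℂ) * (2*(π:ℂ)*Complex.I) := by
        rw [hw]; field_simp
      rw [harg]
      exact Complex.exp_int_mul_two_pi_mul_I r
    have hIcc : ∑ j ∈ Finset.Icc 1 N, (Complex.exp w)^j
        = Complex.exp w * ∑ j ∈ Finset.range N, (Complex.exp w)^j := by
      rw [← Finset.Ico_add_one_right_eq_Icc, Finset.sum_Ico_eq_sum_range, Finset.mul_sum]
      apply Finset.sum_congr (by norm_num)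
      intro i _
      rw [pow_add, pow_one]
    rw [hIcc, geom_sum_eq hz1, hzN]
    simp [hd]

lemma cos_pow (x : ℝ) (m : ℕ) :
    ((Real.cos x : ℂ))^m * (2:ℂ)^m
      = ∑ k ∈ Finset.range (m+1), (m.choose k : ℂ)
          * Complex.exp (Complex.I * ((2*(k:ℤ)-(m:ℤ) : ℤ):ℂ) * (x:ℂ)) := by
  have hc : (Real.cos x : ℂ) * 2
      = Complex.exp ((x:ℂ)*Complex.I) + Complex.exp (-(x:ℂ)*Complex.I) := by
    rw [Complex.ofReal_cos]
    show ((Complex.exp ((x:ℂ)*Complex.I) + Complex.exp (-(x:ℂ)*Complex.I))/2) * 2 = _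
    ring
  have h1 : ((Real.cos x : ℂ))^m * (2:ℂ)^m = ((Real.cos x : ℂ) * 2)^m := by
    rw [mul_pow]
  rw [h1, hc, add_pow]
  apply Finset.sum_congr rfl
  intro k hk
  have hk' : k ≤ m := Nat.lt_succ_iff.mp (Finset.mem_range.mp hk)
  calc Complex.exp ((x:ℂ)*Complex.I)^k * Complex.exp (-(x:ℂ)*Complex.I)^(m-k) * (m.choose k:ℂ)
      = (m.choose k:ℂ) * Complex.exp ((k:ℂ)*((x:ℂ)*Complex.I) + ((m-k:ℕ):ℂ)*(-(x:ℂ)*Complex.I)) := by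
        rw [← Complex.exp_nat_mul, ← Complex.exp_nat_mul, ← Complex.exp_add]; ring
    _ = (m.choose k:ℂ) * Complex.exp (Complex.I * ((2*(k:ℤ)-(m:ℤ) : ℤ):ℂ) * (x:ℂ)) := by
        congr 2
        rw [Nat.cast_sub hk']
        push_cast
        ring

lemma master (N : ℕ) (hN : 1 ≤ N) (φ : ℝ) (m : ℕ) :
    ((∑ j ∈ Finset.Icc 1 N, (Real.cos (2*π*(j:ℝ)/(N:ℝ) + φ))^m : ℝ) : ℂ) * (2:ℂ)^m
      = ∑ k ∈ Finset.range (m+1), (m.choose k : ℂ)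
          * Complex.exp (Complex.I * ((2*(k:ℤ)-(m:ℤ) : ℤ):ℂ) * (φ:ℂ))
          * (if (N:ℤ) ∣ (2*(k:ℤ)-(m:ℤ)) then (N:ℂ) else 0) := by
  have hN0 : (N:ℂ) ≠ 0 := Nat.cast_ne_zero.mpr (by omega)
  have hcast : ((∑ j ∈ Finset.Icc 1 N, (Real.cos (2*π*(j:ℝ)/(N:ℝ) + φ))^m : ℝ) : ℂ)
      = ∑ j ∈ Finset.Icc 1 N, ((Real.cos (2*π*(j:ℝ)/(N:ℝ) + φ) : ℝ) : ℂ)^m := by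
    rw [Complex.ofReal_sum]
    exact Finset.sum_congr rfl (fun j _ => Complex.ofReal_pow _ m)
  rw [hcast, Finset.sum_mul]
  have step1 : ∀ j ∈ Finset.Icc 1 N, ((Real.cos (2*π*(j:ℝ)/(N:ℝ) + φ) : ℝ) : ℂ)^m * (2:ℂ)^m
      = ∑ k ∈ Finset.range (m+1), (m.choose k : ℂ)
          * (Complex.exp (Complex.I * ((2*(k:ℤ)-(m:ℤ) : ℤ):ℂ) * (φ:ℂ))
             * Complex.exp (Complex.I * ((2*(k:ℤ)-(m:ℤ) : ℤ):ℂ) * (2*(π:ℂ)/(N:ℂ)) * (j:ℂ))) := by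
    intro j hj
    rw [cos_pow (2*π*(j:ℝ)/(N:ℝ) + φ) m]
    apply Finset.sum_congr rfl
    intro k hk
    rw [← Complex.exp_add]
    congr 2
    push_cast
    ring
  rw [Finset.sum_congr rfl step1, Finset.sum_comm]
  apply Finset.sum_congr rfl
  intro k hk
  rw [← Finset.mul_sum, ← Finset.mul_sum, Esum N hN (2*(k:ℤ)-(m:ℤ))]
  ring

noncomputable def vv (N m k : ℕ) : ℝ :=
  if (N:ℤ) ∣ (2*(k:ℤ)-(m:ℤ))
  then (m.choose k : ℝ) * N * (1 - (-1:ℝ)^((2*(k:ℤ)-(m:ℤ))/(N:ℤ)))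
  else 0

lemma vv_nonneg (N m k : ℕ) : 0 ≤ vv N m k := by
  unfold vv
  split
  · have h1 : ((-1:ℝ))^((2*(k:ℤ)-(m:ℤ))/(N:ℤ)) ≤ 1 := by
      rcases Int.even_or_odd ((2*(k:ℤ)-(m:ℤ))/(N:ℤ)) with h | h
      · rw [h.neg_one_zpow]
      · rw [Odd.neg_one_zpow h]; norm_num
    have : (0:ℝ) ≤ 1 - ((-1:ℝ))^((2*(k:ℤ)-(m:ℤ))/(N:ℤ)) := by linarith
    positivity
  · exact le_rfl

lemma diff_eq (N : ℕ) (hN : 1 ≤ N) (m : ℕ) :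
    ((∑ j ∈ Finset.Icc 1 N, (Real.cos (2*π*(j:ℝ)/(N:ℝ)))^m)
      - ∑ j ∈ Finset.Icc 1 N, (Real.cos (2*π*(j:ℝ)/(N:ℝ) + (-(π/(N:ℝ)))))^m) * 2^m
      = ∑ k ∈ Finset.range (m+1), vv N m k := by
  have hNZ : (N:ℤ) ≠ 0 := Int.natCast_ne_zero.mpr (by omega)
  have m0 := master N hN 0 m
  have m1 := master N hN (-(π/(N:ℝ))) m
  simp only [add_zero] at m0
  rw [← Complex.ofReal_inj]
  calc ((((∑ j ∈ Finset.Icc 1 N, (Real.cos (2*π*(j:ℝ)/(N:ℝ)))^m)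
      - ∑ j ∈ Finset.Icc 1 N, (Real.cos (2*π*(j:ℝ)/(N:ℝ) + (-(π/(N:ℝ)))))^m) * 2^m : ℝ) : ℂ)
      = ((∑ j ∈ Finset.Icc 1 N, (Real.cos (2*π*(j:ℝ)/(N:ℝ)))^m : ℝ) : ℂ) * (2:ℂ)^m
        - ((∑ j ∈ Finset.Icc 1 N, (Real.cos (2*π*(j:ℝ)/(N:ℝ) + (-(π/(N:ℝ)))))^m : ℝ) : ℂ) * (2:ℂ)^m := by
        push_cast; ring
    _ = ∑ k ∈ Finset.range (m+1), ((m.choose k : ℂ)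
          * Complex.exp (Complex.I * ((2*(k:ℤ)-(m:ℤ) : ℤ):ℂ) * ((0:ℝ):ℂ))
          * (if (N:ℤ) ∣ (2*(k:ℤ)-(m:ℤ)) then (N:ℂ) else 0)
        - (m.choose k : ℂ)
          * Complex.exp (Complex.I * ((2*(k:ℤ)-(m:ℤ) : ℤ):ℂ) * ((-(π/(N:ℝ)):ℝ):ℂ))
          * (if (N:ℤ) ∣ (2*(k:ℤ)-(m:ℤ)) then (N:ℂ) else 0)) := by
        rw [m0, m1, Finset.sum_sub_distrib]
    _ = ∑ k ∈ Finset.range (m+1), ((vv N m k : ℝ) : ℂ) := by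
        apply Finset.sum_congr rfl
        intro k _
        by_cases hd : (N:ℤ) ∣ (2*(k:ℤ)-(m:ℤ))
        · obtain ⟨q, hq⟩ := hd
          have hdq : (2*(k:ℤ)-(m:ℤ))/(N:ℤ) = q := by
            rw [hq, Int.mul_ediv_cancel_left q hNZ]
          have hexp0 : Complex.exp (Complex.I * ((2*(k:ℤ)-(m:ℤ) : ℤ):ℂ) * ((0:ℝ):ℂ)) = 1 := by
            simp
          have hexp1 : Complex.exp (Complex.I * ((2*(k:ℤ)-(m:ℤ) : ℤ):ℂ) * ((-(π/(N:ℝ)):ℝ):ℂ))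
              = ((-1:ℂ))^q := by
            have hNC : (N:ℂ) ≠ 0 := Nat.cast_ne_zero.mpr (by omega)
            have harg : Complex.I * ((2*(k:ℤ)-(m:ℤ) : ℤ):ℂ) * ((-(π/(N:ℝ)):ℝ):ℂ)
                = ((-q : ℤ):ℂ) * ((π:ℂ) * Complex.I) := by
              push_cast [hq]
              field_simp
            rw [harg, Complex.exp_int_mul, Complex.exp_pi_mul_I]
            push_cast
            exact neg_one_zpow_flip q
          rw [hexp0, hexp1, if_pos ⟨q, hq⟩]
          unfold vv
          rw [if_pos ⟨q, hq⟩, hdq]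
          push_cast
          ring
        · unfold vv
          rw [if_neg hd, if_neg hd]
          simp
    _ = ((∑ k ∈ Finset.range (m+1), vv N m k : ℝ) : ℂ) := by
        rw [Complex.ofReal_sum]

lemma delta_le (N : ℕ) (hN : 1 ≤ N) (m : ℕ) :
    ∑ j ∈ Finset.Icc 1 N, (Real.cos (2*π*(j:ℝ)/(N:ℝ) + (-(π/(N:ℝ)))))^m
      ≤ ∑ j ∈ Finset.Icc 1 N, (Real.cos (2*π*(j:ℝ)/(N:ℝ)))^m := by
  have h := diff_eq N hN m
  have hp : (0:ℝ) ≤ ∑ k ∈ Finset.range (m+1), vv N m k :=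
    Finset.sum_nonneg (fun k _ => vv_nonneg N m k)
  have h2 : (0:ℝ) < 2^m := by positivity
  nlinarith [h, hp, h2]

lemma delta_N (N : ℕ) (hN : 2 ≤ N) :
    ∑ j ∈ Finset.Icc 1 N, (Real.cos (2*π*(j:ℝ)/(N:ℝ) + (-(π/(N:ℝ)))))^N + 2*(N:ℝ)/2^N
      ≤ ∑ j ∈ Finset.Icc 1 N, (Real.cos (2*π*(j:ℝ)/(N:ℝ)))^N := by
  have hNZ : (N:ℤ) ≠ 0 := by positivity
  have h := diff_eq N (by omega) N
  have hvv0 : vv N N 0 = 2*(N:ℝ) := by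
    unfold vv
    have hd : (N:ℤ) ∣ (2*((0:ℕ):ℤ)-(N:ℤ)) := ⟨-1, by push_cast; ring⟩
    rw [if_pos hd]
    have : (2*((0:ℕ):ℤ)-(N:ℤ))/(N:ℤ) = -1 := by
      rw [show (2*((0:ℕ):ℤ)-(N:ℤ)) = (N:ℤ)*(-1) by push_cast; ring,
        Int.mul_ediv_cancel_left (-1) hNZ]
    rw [this]
    norm_num [mul_comm]
  have hs : 2*(N:ℝ) ≤ ∑ k ∈ Finset.range (N+1), vv N N k := by
    rw [← hvv0]
    apply Finset.single_le_sum (fun k _ => vv_nonneg N N k)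
    simp
  have h2 : (0:ℝ) < 2^N := by positivity
  have key : 2*(N:ℝ)/2^N ≤ (∑ j ∈ Finset.Icc 1 N, (Real.cos (2*π*(j:ℝ)/(N:ℝ)))^N)
      - ∑ j ∈ Finset.Icc 1 N, (Real.cos (2*π*(j:ℝ)/(N:ℝ) + (-(π/(N:ℝ)))))^N := by
    rw [div_le_iff₀ h2]
    linarith [h, hs]
  linarith

theorem stmt5 (N : ℕ) (hN : 2 ≤ N) (t : ℝ) (ht : t ∈ Set.Ioo (0:ℝ) 1) :
    ∑ j ∈ Finset.Icc 1 N, (1 - t * Real.cos (2 * π * j / N - π / N)) ^ (-(3:ℝ)/2)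
      < ∑ j ∈ Finset.Icc 1 N, (1 - t * Real.cos (2 * π * j / N)) ^ (-(3:ℝ)/2) := by
  obtain ⟨ht0, ht1⟩ := ht
  have hN1 : 1 ≤ N := by omega
  have habs : ∀ x : ℝ, |t * Real.cos x| < 1 := by
    intro x
    rw [abs_mul]
    calc |t| * |Real.cos x| ≤ |t| * 1 :=
          mul_le_mul_of_nonneg_left (Real.abs_cos_le_one x) (abs_nonneg t)
      _ = |t| := mul_one _
      _ < 1 := by rw [abs_of_pos ht0]; exact ht1
  -- rewrite subtraction as + neg
  have hangle : ∀ j : ℕ, 2 * π * (j:ℝ) / N - π / N = 2 * π * (j:ℝ) / N + (-(π/(N:ℝ))) := by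
    intro j; ring
  simp only [hangle]
  set c0 : ℕ → ℝ := fun j => Real.cos (2 * π * (j:ℝ) / N) with hc0
  set c1 : ℕ → ℝ := fun j => Real.cos (2 * π * (j:ℝ) / N + (-(π/(N:ℝ)))) with hc1
  have hR : HasSum (fun m : ℕ => ∑ j ∈ Finset.Icc 1 N, bb m * (t * c0 j)^m)
      (∑ j ∈ Finset.Icc 1 N, (1 - t * c0 j) ^ (-(3:ℝ)/2)) :=
    hasSum_sum (fun j _ => hasSum_bb (habs _))
  have hL : HasSum (fun m : ℕ => ∑ j ∈ Finset.Icc 1 N, bb m * (t * c1 j)^m)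
      (∑ j ∈ Finset.Icc 1 N, (1 - t * c1 j) ^ (-(3:ℝ)/2)) :=
    hasSum_sum (fun j _ => hasSum_bb (habs _))
  have hdiff := hR.sub hL
  have hfun : (fun m : ℕ => (∑ j ∈ Finset.Icc 1 N, bb m * (t * c0 j)^m)
        - ∑ j ∈ Finset.Icc 1 N, bb m * (t * c1 j)^m)
      = fun m : ℕ => bb m * t^m *
        ((∑ j ∈ Finset.Icc 1 N, (c0 j)^m) - ∑ j ∈ Finset.Icc 1 N, (c1 j)^m) := by
    funext m
    rw [mul_sub, Finset.mul_sum, Finset.mul_sum]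
    congr 1 <;> exact Finset.sum_congr rfl (fun j _ => by rw [mul_pow]; ring)
  rw [hfun] at hdiff
  have hnonneg : ∀ m : ℕ, 0 ≤ bb m * t^m *
      ((∑ j ∈ Finset.Icc 1 N, (c0 j)^m) - ∑ j ∈ Finset.Icc 1 N, (c1 j)^m) := by
    intro m
    apply mul_nonneg (mul_nonneg (bb_pos m).le (pow_nonneg ht0.le m))
    have := delta_le N hN1 m
    simp only [hc0, hc1]
    linarith [this]
  have hposN : 0 < bb N * t^N *
      ((∑ j ∈ Finset.Icc 1 N, (c0 j)^N) - ∑ j ∈ Finset.Icc 1 N, (c1 j)^N) := by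
    apply mul_pos (mul_pos (bb_pos N) (pow_pos ht0 N))
    have := delta_N N hN
    have hNpos : (0:ℝ) < 2*(N:ℝ)/2^N := by positivity
    simp only [hc0, hc1]
    linarith [this]
  have hle := le_hasSum hdiff N (fun i _ => hnonneg i)
  have : 0 < (∑ j ∈ Finset.Icc 1 N, (1 - t * c0 j) ^ (-(3:ℝ)/2))
      - ∑ j ∈ Finset.Icc 1 N, (1 - t * c1 j) ^ (-(3:ℝ)/2) := lt_of_lt_of_le hposN hle
  linarith
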